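/- Let M be a weight sequence and e: (0,∞) → (0,∞) with e(t) ≥ K_1 h_M(K_2/t) for all t > 0. If there exist C, h > 0 such that the moments μ(p) = ∫_0^∞ t^p e(t) dt satisfy μ(p) ≤ C h^p M_{p+1} for all p ∈ ℕ_0, then M satisfies sm; indeed K_1 K_2^{p+1} M_{p+1} log(m_{p+1}/m_p) ≤ C h^p M_{p+1} for all p. -/

import Mathlib

open MeasureTheory

private lemma aux_min_term (M : ℕ → ℝ) (hpos : ∀ p, 0 < M p)
    (hmono : Monotone (fun p => M (p+1) / M p)) (p : ℕ) (s : ℝ) (hs : 0 < s)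
    (h1 : s * (M (p+1) / M p) ≤ 1) (h2 : 1 ≤ s * (M (p+2) / M (p+1))) :
    ∀ q, M (p+1) * s ^ (p+1) ≤ M q * s ^ q := by
  have hstepdown : ∀ j, j ≤ p → M (j+1) * s ^ (j+1) ≤ M j * s ^ j := by
    intro j hj
    have hm : s * (M (j+1) / M j) ≤ 1 :=
      le_trans (mul_le_mul_of_nonneg_left (hmono hj) hs.le) h1
    have hMj := hpos j
    have key : M (j+1) * s ≤ M j := by
      have := mul_le_mul_of_nonneg_right hm hMj.le
      rwa [one_mul, mul_assoc, div_mul_cancel₀ _ hMj.ne', mul_comm] at this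
    calc M (j+1) * s ^ (j+1) = (M (j+1) * s) * s ^ j := by ring
      _ ≤ M j * s ^ j := mul_le_mul_of_nonneg_right key (pow_nonneg hs.le j)
  have hstepup : ∀ j, p + 1 ≤ j → M j * s ^ j ≤ M (j+1) * s ^ (j+1) := by
    intro j hj
    have hm : 1 ≤ s * (M (j+1) / M j) :=
      le_trans h2 (mul_le_mul_of_nonneg_left (hmono hj) hs.le)
    have hMj := hpos j
    have key : M j ≤ M (j+1) * s := by
      have := mul_le_mul_of_nonneg_right hm hMj.le
      rwa [one_mul, mul_assoc, div_mul_cancel₀ _ hMj.ne', mul_comm] at this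
    calc M j * s ^ j ≤ (M (j+1) * s) * s ^ j :=
          mul_le_mul_of_nonneg_right key (pow_nonneg hs.le j)
      _ = M (j+1) * s ^ (j+1) := by ring
  have hdown : ∀ n, n ≤ p + 1 → M (p+1) * s ^ (p+1) ≤ M (p+1-n) * s ^ (p+1-n) := by
    intro n
    induction n with
    | zero => intro _; simp
    | succ k ih =>
      intro hk
      have hk' : k ≤ p + 1 := by omega
      have h1' : p + 1 - k = (p + 1 - (k+1)) + 1 := by omega
      have h2' : p + 1 - (k+1) ≤ p := by omega
      calc M (p+1) * s ^ (p+1) ≤ M (p+1-k) * s ^ (p+1-k) := ih hk'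
        _ = M ((p+1-(k+1)) + 1) * s ^ ((p+1-(k+1)) + 1) := by rw [← h1']
        _ ≤ M (p+1-(k+1)) * s ^ (p+1-(k+1)) := hstepdown _ h2'
  have hup : ∀ q, p + 1 ≤ q → M (p+1) * s ^ (p+1) ≤ M q * s ^ q := by
    intro q hq
    induction q, hq using Nat.le_induction with
    | base => exact le_refl _
    | succ n hn ih => exact le_trans ih (hstepup n hn)
  intro q
  rcases le_or_gt q (p+1) with hq | hq
  · have := hdown (p+1-q) (by omega)
    have hq' : p + 1 - (p + 1 - q) = q := by omega
    rwa [hq'] at this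
  · exact hup q (by omega)

/-- If the moments of a kernel bounded below by the associated function grow like
`C h ^ p M (p+1)`, then `M` satisfies the shifted moments property. -/
theorem moments_bound_implies_sm (M : ℕ → ℝ) (hpos : ∀ p, 0 < M p) (hM0 : M 0 = 1)
    (hlc : ∀ p : ℕ, M (p+1) / M p ≤ M (p+2) / M (p+1))
    (hqinf : Filter.Tendsto (fun p : ℕ => M (p+1) / M p) Filter.atTop Filter.atTop)
    (e : ℝ → ℝ) (hepos : ∀ x : ℝ, 0 < x → 0 < e x)
    (K1 K2 : ℝ) (hK1 : 0 < K1) (hK2 : 0 < K2)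
    (hlow : ∀ t : ℝ, 0 < t → K1 * (⨅ q : ℕ, M q * (K2 / t) ^ q) ≤ e t)
    (C h : ℝ) (hC : 0 < C) (hh : 0 < h)
    (hmom : ∀ p : ℕ,
      (∫⁻ t in Set.Ioi (0:ℝ), ENNReal.ofReal (t ^ p * e t)) ≤
        ENNReal.ofReal (C * h ^ p * M (p+1))) :
    (∀ p : ℕ, K1 * K2 ^ (p+1) * M (p+1) *
        Real.log ((M (p+2) / M (p+1)) / (M (p+1) / M p)) ≤ C * h ^ p * M (p+1)) ∧
    (∃ C0 > (0:ℝ), ∃ H > (1:ℝ), ∀ p : ℕ,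
        Real.log ((M (p+2) / M (p+1)) / (M (p+1) / M p)) ≤ C0 * H ^ (p+1)) := by
  have hmono : Monotone (fun p => M (p+1) / M p) := monotone_nat_of_le_succ hlc
  have key : ∀ p : ℕ, K1 * K2 ^ (p+1) * M (p+1) *
      Real.log ((M (p+2) / M (p+1)) / (M (p+1) / M p)) ≤ C * h ^ p * M (p+1) := by
    intro p
    set L := Real.log ((M (p+2) / M (p+1)) / (M (p+1) / M p)) with hL
    have hmp : 0 < M (p+1) / M p := div_pos (hpos _) (hpos _)
    have hmp1 : 0 < M (p+2) / M (p+1) := div_pos (hpos _) (hpos _)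
    rcases le_or_gt L 0 with hL0 | hL0
    · have h1 : 0 < K1 * K2 ^ (p+1) * M (p+1) := mul_pos (mul_pos hK1 (pow_pos hK2 _)) (hpos _)
      have h2 : 0 < C * h ^ p * M (p+1) := mul_pos (mul_pos hC (pow_pos hh _)) (hpos _)
      nlinarith
    · have hr : 1 < (M (p+2) / M (p+1)) / (M (p+1) / M p) := by
        by_contra hcon
        push_neg at hcon
        have : L ≤ 0 := Real.log_nonpos (by positivity) hcon -- keep
        linarith
      set a := K2 * (M (p+1) / M p) with ha
      set b := K2 * (M (p+2) / M (p+1)) with hb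
      have ha0 : 0 < a := by positivity
      have hab : a < b := by
        have : M (p+1) / M p < M (p+2) / M (p+1) := by
          have := (one_lt_div hmp).mp hr
          linarith
        exact (mul_lt_mul_iff_right₀ hK2).mpr this
      set c := K1 * K2 ^ (p+1) * M (p+1) with hc
      have hc0 : 0 < c := mul_pos (mul_pos hK1 (pow_pos hK2 _)) (hpos _)
      -- pointwise lower bound on Ioo a b
      have hpt : ∀ t ∈ Set.Ioo a b, c / t ≤ t ^ p * e t := by
        intro t ht
        have ht0 : 0 < t := ha0.trans ht.1
        set s := K2 / t with hs'
        have hs : 0 < s := div_pos hK2 ht0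
        have h1 : s * (M (p+1) / M p) ≤ 1 := by
          have : s * (M (p+1) / M p) = a / t := by rw [hs', ha]; ring
          rw [this]
          exact le_of_lt ((div_lt_one ht0).mpr ht.1)
        have h2 : 1 ≤ s * (M (p+2) / M (p+1)) := by
          have : s * (M (p+2) / M (p+1)) = b / t := by rw [hs', hb]; ring
          rw [this]
          exact le_of_lt ((one_lt_div ht0).mpr ht.2)
        have hmin := aux_min_term M hpos hmono p s hs h1 h2
        have hbdd : M (p+1) * s ^ (p+1) ≤ ⨅ q : ℕ, M q * (K2 / t) ^ q :=
          le_ciInf fun q => hmin q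
        have hle : K1 * (M (p+1) * s ^ (p+1)) ≤ e t :=
          le_trans (mul_le_mul_of_nonneg_left hbdd hK1.le) (hlow t ht0)
        have heq : t ^ p * (K1 * (M (p+1) * s ^ (p+1))) = c / t := by
          rw [hs', hc, div_pow]
          field_simp
          ring
        calc c / t = t ^ p * (K1 * (M (p+1) * s ^ (p+1))) := heq.symm
          _ ≤ t ^ p * e t := mul_le_mul_of_nonneg_left hle (pow_nonneg ht0.le p)
      -- integral computation
      have hcont : ContinuousOn (fun t : ℝ => c / t) (Set.Icc a b) :=
        continuousOn_const.div continuousOn_id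
          (fun x hx => ne_of_gt (lt_of_lt_of_le ha0 hx.1))
      have hint : IntegrableOn (fun t : ℝ => c / t) (Set.Ioo a b) :=
        (hcont.integrableOn_Icc).mono_set Set.Ioo_subset_Icc_self
      have hnn : 0 ≤ᵐ[volume.restrict (Set.Ioo a b)] fun t : ℝ => c / t := by
        refine (ae_restrict_iff' measurableSet_Ioo).mpr (Filter.Eventually.of_forall ?_)
        intro x hx
        exact div_nonneg hc0.le (le_of_lt (ha0.trans hx.1))
      have hzero : (0:ℝ) ∉ Set.uIcc a b := by
        rw [Set.uIcc_of_le hab.le]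
        intro hmem
        exact absurd hmem.1 (not_le.mpr ha0)
      have hval : ∫ t in Set.Ioo a b, c / t = c * Real.log (b / a) := by
        rw [← MeasureTheory.integral_Ioc_eq_integral_Ioo,
          ← intervalIntegral.integral_of_le hab.le]
        have : ∀ x : ℝ, c / x = c * x⁻¹ := fun x => div_eq_mul_inv c x
        simp_rw [this]
        rw [intervalIntegral.integral_const_mul, integral_inv hzero]
      have hcalc : (∫⁻ t in Set.Ioo a b, ENNReal.ofReal (c / t)) =
          ENNReal.ofReal (c * Real.log (b / a)) := by
        rw [← MeasureTheory.ofReal_integral_eq_lintegral_ofReal hint hnn, hval]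
      have hmono1 : (∫⁻ t in Set.Ioo a b, ENNReal.ofReal (c / t)) ≤
          ∫⁻ t in Set.Ioo a b, ENNReal.ofReal (t ^ p * e t) := by
        refine lintegral_mono_ae ?_
        refine (ae_restrict_iff' measurableSet_Ioo).mpr (Filter.Eventually.of_forall ?_)
        intro x hx
        exact ENNReal.ofReal_le_ofReal (hpt x hx)
      have hmono2 : (∫⁻ t in Set.Ioo a b, ENNReal.ofReal (t ^ p * e t)) ≤
          ∫⁻ t in Set.Ioi (0:ℝ), ENNReal.ofReal (t ^ p * e t) :=
        lintegral_mono_set (fun x hx => ha0.trans hx.1)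
      have hfinal : ENNReal.ofReal (c * Real.log (b / a)) ≤
          ENNReal.ofReal (C * h ^ p * M (p+1)) := by
        rw [← hcalc]
        exact le_trans hmono1 (le_trans hmono2 (hmom p))
      have hreal : c * Real.log (b / a) ≤ C * h ^ p * M (p+1) :=
        (ENNReal.ofReal_le_ofReal_iff (mul_pos (mul_pos hC (pow_pos hh _)) (hpos _)).le).mp hfinal
      have hba : b / a = (M (p+2) / M (p+1)) / (M (p+1) / M p) := by
        rw [ha, hb, mul_div_mul_left _ _ hK2.ne']
      rw [hba] at hreal
      exact hreal
  refine ⟨key, ?_⟩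
  refine ⟨C / (K1 * K2), by positivity, max (h / K2) 2, lt_of_lt_of_le one_lt_two (le_max_right _ _), ?_⟩
  intro p
  set L := Real.log ((M (p+2) / M (p+1)) / (M (p+1) / M p)) with hL
  have hc0 : 0 < K1 * K2 ^ (p+1) * M (p+1) := mul_pos (mul_pos hK1 (pow_pos hK2 _)) (hpos _)
  have h1 : L ≤ C * h ^ p * M (p+1) / (K1 * K2 ^ (p+1) * M (p+1)) := by
    rw [le_div_iff₀ hc0, mul_comm]
    exact key p
  have h2 : C * h ^ p * M (p+1) / (K1 * K2 ^ (p+1) * M (p+1)) =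
      (C / (K1 * K2)) * (h / K2) ^ p := by
    rw [div_pow]
    field_simp [(hpos (p+1)).ne']
    ring
  rw [h2] at h1
  refine le_trans h1 ?_
  have hH2 : (1:ℝ) ≤ max (h / K2) 2 := le_trans one_le_two (le_max_right _ _)
  have hhk : 0 ≤ h / K2 := by positivity
  have hstep : (h / K2) ^ p ≤ (max (h / K2) 2) ^ (p+1) := by
    calc (h / K2) ^ p ≤ (max (h / K2) 2) ^ p :=
          pow_le_pow_left₀ hhk (le_max_left _ _) p
      _ ≤ (max (h / K2) 2) ^ (p+1) := pow_le_pow_right₀ hH2 (by omega)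
  exact mul_le_mul_of_nonneg_left hstep (by positivity)
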